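/- The function Ψ_x(u,v) = ∫_{ℝ^d × ℝ^q} (e^{(⟨u,y⟩+v)K(z)} − 1) f(x,y) dz dy is strictly convex on ℝ^q × ℝ. -/

import Mathlib

open MeasureTheory Real

/-- Strict convexity of `Ψ_x(u,v) = ∫ (e^{(⟨u,y⟩+v)K(z)} - 1) f(x,y) dz dy` on `ℝ^q × ℝ`. -/
theorem stmt3 (d q : ℕ)
    (K : EuclideanSpace ℝ (Fin d) → ℝ)
    (f : EuclideanSpace ℝ (Fin d) → EuclideanSpace ℝ (Fin q) → ℝ)
    (x : EuclideanSpace ℝ (Fin d))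
    (hKmeas : Measurable K) (hKbdd : ∃ M : ℝ, ∀ z, |K z| ≤ M)
    (hKint : Integrable K) (hK1 : ∫ z, K z = 1)
    (hKne : volume {z | K z ≠ 0} ≠ 0)
    (hfmeas : Measurable (f x)) (hfnn : ∀ y, 0 ≤ f x y)
    (hfprob : ∫ y, f x y = 1)
    (hmom : ∀ (m ρ : ℝ), 0 ≤ m → 0 ≤ ρ →
      Integrable (fun y : EuclideanSpace ℝ (Fin q) =>
        ‖y‖ ^ m * Real.exp (ρ * ‖y‖) * f x y))
    (hint : ∀ (u : EuclideanSpace ℝ (Fin q)) (v : ℝ),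
      Integrable (fun p : EuclideanSpace ℝ (Fin d) × EuclideanSpace ℝ (Fin q) =>
        (Real.exp (((inner ℝ u p.2 : ℝ) + v) * K p.1) - 1) * f x p.2)) :
    StrictConvexOn ℝ Set.univ
      (fun w : EuclideanSpace ℝ (Fin q) × ℝ =>
        ∫ p : EuclideanSpace ℝ (Fin d) × EuclideanSpace ℝ (Fin q),
          (Real.exp (((inner ℝ w.1 p.2 : ℝ) + w.2) * K p.1) - 1) * f x p.2) := by
  constructor
  · exact convex_univ
  intro w _ w' _ hne a b ha hb hab
  simp only [smul_eq_mul]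
  set G : (EuclideanSpace ℝ (Fin q) × ℝ) →
      (EuclideanSpace ℝ (Fin d) × EuclideanSpace ℝ (Fin q)) → ℝ :=
    fun w p => (Real.exp (((inner ℝ w.1 p.2 : ℝ) + w.2) * K p.1) - 1) * f x p.2 with hGdef
  have hIw : Integrable (G w) := hint w.1 w.2
  have hIw' : Integrable (G w') := hint w'.1 w'.2
  have hImid : Integrable (G (a • w + b • w')) := hint (a • w + b • w').1 (a • w + b • w').2
  set Δ : (EuclideanSpace ℝ (Fin d) × EuclideanSpace ℝ (Fin q)) → ℝ :=
    fun p => a * G w p + b * G w' p - G (a • w + b • w') p with hΔdef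
  have hΔint : Integrable Δ := ((hIw.const_mul a).add (hIw'.const_mul b)).sub hImid
  -- exponent arithmetic
  have hexp : ∀ p : EuclideanSpace ℝ (Fin d) × EuclideanSpace ℝ (Fin q),
      ((inner ℝ (a • w + b • w').1 p.2 : ℝ) + (a • w + b • w').2) * K p.1
        = a * (((inner ℝ w.1 p.2 : ℝ) + w.2) * K p.1)
          + b * (((inner ℝ w'.1 p.2 : ℝ) + w'.2) * K p.1) := by
    intro p
    have : (inner ℝ ((a • w + b • w').1) p.2 : ℝ)
        = a * (inner ℝ w.1 p.2 : ℝ) + b * (inner ℝ w'.1 p.2 : ℝ) := by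
      simp [Prod.fst_add, Prod.smul_fst, inner_add_left, real_inner_smul_left,
        Finset.mul_sum, mul_assoc]
    rw [this]
    simp [Prod.snd_add, Prod.smul_snd, smul_eq_mul]
    ring
  -- pointwise nonnegativity
  have hΔnn : ∀ p, 0 ≤ Δ p := by
    intro p
    have hconv := convexOn_exp.2 (Set.mem_univ (((inner ℝ w.1 p.2 : ℝ) + w.2) * K p.1))
      (Set.mem_univ (((inner ℝ w'.1 p.2 : ℝ) + w'.2) * K p.1)) ha.le hb.le hab
    simp only [smul_eq_mul] at hconv
    have h1 : Δ p = (a * Real.exp (((inner ℝ w.1 p.2 : ℝ) + w.2) * K p.1)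
        + b * Real.exp (((inner ℝ w'.1 p.2 : ℝ) + w'.2) * K p.1)
        - Real.exp (a * (((inner ℝ w.1 p.2 : ℝ) + w.2) * K p.1)
            + b * (((inner ℝ w'.1 p.2 : ℝ) + w'.2) * K p.1))) * f x p.2 := by
      simp only [hΔdef, hGdef, hexp p]
      linear_combination (-(f x p.2)) * hab
    rw [h1]
    exact mul_nonneg (by linarith [hconv]) (hfnn p.2)
  -- strict positivity on a product set
  set c : EuclideanSpace ℝ (Fin q) := w.1 - w'.1 with hc
  set t' : ℝ := w.2 - w'.2 with ht'
  set A : Set (EuclideanSpace ℝ (Fin d)) := {z | K z ≠ 0} with hA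
  set B : Set (EuclideanSpace ℝ (Fin q)) :=
    {y | f x y ≠ 0} \ {y | (inner ℝ c y : ℝ) + t' = 0} with hB
  have hSub : A ×ˢ B ⊆ Function.support Δ := by
    rintro ⟨z, y⟩ ⟨hzA, hyB⟩
    have hfy : 0 < f x y := lt_of_le_of_ne (hfnn y) (Ne.symm hyB.1)
    have hstne : ((inner ℝ w.1 y : ℝ) + w.2) * K z ≠ ((inner ℝ w'.1 y : ℝ) + w'.2) * K z := by
      intro h
      apply hyB.2
      have hK : K z ≠ 0 := hzA
      have : ((inner ℝ w.1 y : ℝ) + w.2) = ((inner ℝ w'.1 y : ℝ) + w'.2) :=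
        mul_right_cancel₀ hK h
      simp only [hc, ht', inner_sub_left]
      simp only [Set.mem_setOf_eq]
      linarith [this]
    have hstrict := strictConvexOn_exp.2 (Set.mem_univ _) (Set.mem_univ _) hstne ha hb hab
    simp only [smul_eq_mul] at hstrict
    have h1 : Δ (z, y) = (a * Real.exp (((inner ℝ w.1 y : ℝ) + w.2) * K z)
        + b * Real.exp (((inner ℝ w'.1 y : ℝ) + w'.2) * K z)
        - Real.exp (a * (((inner ℝ w.1 y : ℝ) + w.2) * K z)
            + b * (((inner ℝ w'.1 y : ℝ) + w'.2) * K z))) * f x y := by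
      simp only [hΔdef, hGdef, hexp (z, y)]
      linear_combination (-(f x y)) * hab
    have : 0 < Δ (z, y) := by
      rw [h1]
      exact mul_pos (by linarith [hstrict]) hfy
    exact ne_of_gt this
  -- B has positive measure
  have hNnull : volume {y : EuclideanSpace ℝ (Fin q) | (inner ℝ c y : ℝ) + t' = 0} = 0 := by
    by_cases hc0 : c = 0
    · have ht'0 : t' ≠ 0 := by
        intro h
        apply hne
        have h1 : w.1 = w'.1 := sub_eq_zero.mp hc0
        have h2 : w.2 = w'.2 := sub_eq_zero.mp h
        exact Prod.ext h1 h2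
      have hEmptyN : {y : EuclideanSpace ℝ (Fin q) | (inner ℝ c y : ℝ) + t' = 0} = ∅ := by
        ext y
        simp only [Set.mem_setOf_eq, Set.mem_empty_iff_false, iff_false]
        rw [hc0, inner_zero_left]
        simpa using ht'0
      rw [hEmptyN]
      exact measure_empty
    · set y₀ : EuclideanSpace ℝ (Fin q) := (-t' / ‖c‖ ^ 2) • c with hy₀
      have hn : ‖c‖ ^ 2 ≠ 0 := pow_ne_zero _ (norm_ne_zero_iff.mpr hc0)
      have hcy : ∀ y : EuclideanSpace ℝ (Fin q),
          (inner ℝ c (y₀ + y) : ℝ) + t' = (inner ℝ c y : ℝ) := by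
        intro y
        rw [inner_add_right, hy₀, real_inner_smul_right, real_inner_self_eq_norm_sq]
        field_simp
        ring
      have hker : (fun y => y₀ + y) ⁻¹' {y : EuclideanSpace ℝ (Fin q) | (inner ℝ c y : ℝ) + t' = 0}
          = ((LinearMap.ker (innerSL ℝ c : EuclideanSpace ℝ (Fin q) →ₗ[ℝ] ℝ) : Submodule ℝ (EuclideanSpace ℝ (Fin q))) : Set (EuclideanSpace ℝ (Fin q))) := by
        ext y
        simp only [Set.mem_preimage, Set.mem_setOf_eq, SetLike.mem_coe, LinearMap.mem_ker,
          ContinuousLinearMap.coe_coe, innerSL_apply_apply]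
        rw [hcy y]
      have hker_ne : LinearMap.ker (innerSL ℝ c : EuclideanSpace ℝ (Fin q) →ₗ[ℝ] ℝ) ≠ ⊤ := by
        intro h
        have hcmem : c ∈ LinearMap.ker (innerSL ℝ c : EuclideanSpace ℝ (Fin q) →ₗ[ℝ] ℝ) := h ▸ Submodule.mem_top
        simp only [LinearMap.mem_ker, ContinuousLinearMap.coe_coe, innerSL_apply_apply] at hcmem
        rw [real_inner_self_eq_norm_sq] at hcmem
        exact hn hcmem
      calc volume {y : EuclideanSpace ℝ (Fin q) | (inner ℝ c y : ℝ) + t' = 0}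
          = volume ((fun y => y₀ + y) ⁻¹' {y : EuclideanSpace ℝ (Fin q) | (inner ℝ c y : ℝ) + t' = 0}) :=
            (measure_preimage_add volume y₀ _).symm
        _ = volume (((LinearMap.ker (innerSL ℝ c : EuclideanSpace ℝ (Fin q) →ₗ[ℝ] ℝ) : Submodule ℝ (EuclideanSpace ℝ (Fin q))) : Set (EuclideanSpace ℝ (Fin q)))) := by rw [hker]
        _ = 0 := Measure.addHaar_submodule volume _ hker_ne
  have hfne : volume {y : EuclideanSpace ℝ (Fin q) | f x y ≠ 0} ≠ 0 := by
    intro h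
    have hae : ∀ᵐ y, f x y = 0 := by
      rw [ae_iff]
      convert h using 2
    have : (∫ y, f x y) = 0 := integral_eq_zero_of_ae hae
    rw [hfprob] at this
    norm_num at this
  have hBpos : volume B ≠ 0 := by
    rw [hB, measure_diff_null hNnull]
    exact hfne
  -- conclude positivity of ∫ Δ
  have hsupp : 0 < volume (Function.support Δ) := by
    have hle : volume (A ×ˢ B) ≤ volume (Function.support Δ) := measure_mono hSub
    have hprod : volume (A ×ˢ B) = volume A * volume B := by
      rw [Measure.volume_eq_prod]
      exact Measure.prod_prod A B
    have : volume (A ×ˢ B) ≠ 0 := by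
      rw [hprod]
      exact mul_ne_zero hKne hBpos
    exact lt_of_lt_of_le (pos_iff_ne_zero.mpr this) hle
  have hΔpos : 0 < ∫ p, Δ p := by
    rw [integral_pos_iff_support_of_nonneg_ae (Filter.Eventually.of_forall hΔnn) hΔint]
    exact hsupp
  -- split the integral
  have hsplit : (∫ p, Δ p) = a * (∫ p, G w p) + b * (∫ p, G w' p) - ∫ p, G (a • w + b • w') p := by
    have hI1 : Integrable (fun p => a * G w p + b * G w' p) :=
      (hIw.const_mul a).add (hIw'.const_mul b)
    simp only [hΔdef]
    rw [integral_sub hI1 hImid, integral_add (hIw.const_mul a) (hIw'.const_mul b),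
      integral_const_mul, integral_const_mul]
  rw [hsplit] at hΔpos
  show (∫ p, G (a • w + b • w') p) < a * (∫ p, G w p) + b * (∫ p, G w' p)
  linarith
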